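/- Let 0 < H < 1/2, T > 0, and r := 1/(2H). The covariance function R(s,t) = ½(s^{2H} + t^{2H} − |t−s|^{2H}) of fractional Brownian motion on [0,T] has finite two-dimensional r-variation; more precisely, for any partitions {s_0 = 0 < s_1 < … < s_M = T} and {t_0 = 0 < … < t_N = T}, one has Σ_{i=1}^{M} Σ_{j=1}^{N} |Δ_{ij}R|^r ≤ 5T, where Δ_{ij}R = R(s_i,t_j) − R(s_{i-1},t_j) − R(s_i,t_{j-1}) + R(s_{i-1},t_{j-1}). Consequently ‖R‖_{r}^{(2D)} ≤ (5T)^{2H}. -/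

import Mathlib

set_option linter.unusedSectionVars false

open Real Set

/-- Key lemma: for `0 < p ≤ 1` and `δ ≥ 0`, `x ↦ (x+δ)^p - x^p` is antitone on `[0,∞)`. -/
lemma rpow_shift_antitoneOn {p δ : ℝ} (hp : 0 < p) (hp1 : p ≤ 1) (hδ : 0 ≤ δ) :
    AntitoneOn (fun x : ℝ => (x + δ) ^ p - x ^ p) (Ici 0) := by
  rcases eq_or_lt_of_le hδ with rfl | hδ'
  · simp
    exact antitoneOn_const
  apply antitoneOn_of_deriv_nonpos (convex_Ici 0)
  · apply ContinuousOn.sub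
    · apply ContinuousOn.rpow_const (by fun_prop)
      intro x hx
      exact Or.inl (by simp only [mem_Ici] at hx; nlinarith)
    · exact ContinuousOn.rpow_const (by fun_prop) fun x _ => Or.inr hp.le
  · rw [interior_Ici]
    intro x hx
    simp only [mem_Ioi] at hx
    have h1 : HasDerivAt (fun x : ℝ => (x + δ) ^ p) (p * (x + δ) ^ (p - 1) * 1) x := by
      exact (Real.hasDerivAt_rpow_const (Or.inl (by positivity))).comp x
        ((hasDerivAt_id x).add_const δ)
    have h2 : HasDerivAt (fun x : ℝ => x ^ p) (p * x ^ (p - 1)) x :=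
      Real.hasDerivAt_rpow_const (Or.inl hx.ne')
    exact (h1.sub h2).differentiableAt.differentiableWithinAt
  · rw [interior_Ici]
    intro x hx
    simp only [mem_Ioi] at hx
    have h1 : HasDerivAt (fun x : ℝ => (x + δ) ^ p) (p * (x + δ) ^ (p - 1) * 1) x :=
      (Real.hasDerivAt_rpow_const (Or.inl (by positivity))).comp x
        ((hasDerivAt_id x).add_const δ)
    have h2 : HasDerivAt (fun x : ℝ => x ^ p) (p * x ^ (p - 1)) x :=
      Real.hasDerivAt_rpow_const (Or.inl hx.ne')
    rw [show (fun x : ℝ => (x + δ) ^ p - x ^ p) = ((fun x : ℝ => (x + δ) ^ p) - fun x : ℝ => x ^ p) from rfl, (h1.sub h2).deriv]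
    have : (x + δ) ^ (p - 1) ≤ x ^ (p - 1) :=
      Real.rpow_le_rpow_of_nonpos hx (by linarith) (by linarith)
    nlinarith

/-- Subadditivity of `x ↦ x^p` for `0 < p ≤ 1`. -/
lemma rpow_add_le {p x δ : ℝ} (hp : 0 < p) (hp1 : p ≤ 1) (hx : 0 ≤ x) (hδ : 0 ≤ δ) :
    (x + δ) ^ p ≤ x ^ p + δ ^ p := by
  have := rpow_shift_antitoneOn hp hp1 hδ (self_mem_Ici) (mem_Ici.mpr hx) hx
  simp only [zero_add, Real.zero_rpow hp.ne'] at this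
  linarith

/-- The one-variable slice function. -/
noncomputable def psiF (p a b : ℝ) : ℝ → ℝ := fun u => |u - a| ^ p - |u - b| ^ p

section psi

variable {p a b : ℝ} (hp : 0 < p) (hp1 : p ≤ 1) (hab : a ≤ b)
include hp hp1 hab

lemma psiF_monoOn : MonotoneOn (psiF p a b) (Icc a b) := by
  intro c hc d hd hcd
  simp only [mem_Icc] at hc hd
  unfold psiF
  rw [abs_of_nonneg (by linarith : (0:ℝ) ≤ c - a), abs_of_nonneg (by linarith : (0:ℝ) ≤ d - a),
    abs_of_nonpos (by linarith : c - b ≤ 0), abs_of_nonpos (by linarith : d - b ≤ 0),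
    (by ring : -(c - b) = b - c), (by ring : -(d - b) = b - d)]
  have h1 : (c - a) ^ p ≤ (d - a) ^ p := Real.rpow_le_rpow (by linarith) (by linarith) hp.le
  have h2 : (b - d) ^ p ≤ (b - c) ^ p := Real.rpow_le_rpow (by linarith) (by linarith) hp.le
  linarith

lemma psiF_anti_left : AntitoneOn (psiF p a b) (Iic a) := by
  intro c hc d hd hcd
  simp only [mem_Iic] at hc hd
  unfold psiF
  rw [abs_of_nonpos (by linarith : d - a ≤ 0), abs_of_nonpos (by linarith : d - b ≤ 0),
    abs_of_nonpos (by linarith : c - a ≤ 0), abs_of_nonpos (by linarith : c - b ≤ 0),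
    (by ring : -(d - a) = a - d), (by ring : -(d - b) = -(d - b)),
    (by ring : -(c - a) = a - c)]
  have key := rpow_shift_antitoneOn hp hp1 (by linarith : (0:ℝ) ≤ b - a)
    (mem_Ici.mpr (by linarith : (0:ℝ) ≤ a - d)) (mem_Ici.mpr (by linarith : (0:ℝ) ≤ a - c))
    (by linarith)
  simp only at key
  have e1 : a - d + (b - a) = -(d - b) := by ring
  have e2 : a - c + (b - a) = -(c - b) := by ring
  rw [e1, e2] at key
  linarith

lemma psiF_anti_right : AntitoneOn (psiF p a b) (Ici b) := by
  intro c hc d hd hcd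
  simp only [mem_Ici] at hc hd
  unfold psiF
  rw [abs_of_nonneg (by linarith : (0:ℝ) ≤ d - a), abs_of_nonneg (by linarith : (0:ℝ) ≤ d - b),
    abs_of_nonneg (by linarith : (0:ℝ) ≤ c - a), abs_of_nonneg (by linarith : (0:ℝ) ≤ c - b)]
  have key := rpow_shift_antitoneOn hp hp1 (by linarith : (0:ℝ) ≤ b - a)
    (mem_Ici.mpr (by linarith : (0:ℝ) ≤ c - b)) (mem_Ici.mpr (by linarith : (0:ℝ) ≤ d - b))
    (by linarith)
  simp only at key
  have e1 : c - b + (b - a) = c - a := by ring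
  have e2 : d - b + (b - a) = d - a := by ring
  rw [e1, e2] at key
  linarith

lemma psiF_abs_le (u : ℝ) : |psiF p a b u| ≤ (b - a) ^ p := by
  unfold psiF
  rw [abs_le]
  rcases le_total u a with hua | hau
  · rw [abs_of_nonpos (by linarith : u - a ≤ 0), abs_of_nonpos (by linarith : u - b ≤ 0)]
    have h1 : (a - u) ^ p ≤ (b - u) ^ p := Real.rpow_le_rpow (by linarith) (by linarith) hp.le
    have h2 : (b - u) ^ p ≤ (a - u) ^ p + (b - a) ^ p := by
      have := rpow_add_le hp hp1 (by linarith : (0:ℝ) ≤ a - u) (by linarith : (0:ℝ) ≤ b - a)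
      have e : a - u + (b - a) = b - u := by ring
      rwa [e] at this
    rw [(by ring : -(u - a) = a - u), (by ring : -(u - b) = b - u)]
    have : (0:ℝ) ≤ (b-a)^p := Real.rpow_nonneg (by linarith) p
    constructor <;> linarith
  · rcases le_total u b with hub | hbu
    · rw [abs_of_nonneg (by linarith : (0:ℝ) ≤ u - a), abs_of_nonpos (by linarith : u - b ≤ 0)]
      have h1 : (u - a) ^ p ≤ (b - a) ^ p := Real.rpow_le_rpow (by linarith) (by linarith) hp.le
      have h2 : (-(u - b)) ^ p ≤ (b - a) ^ p := by
        apply Real.rpow_le_rpow (by linarith) (by linarith) hp.le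
      have h3 : (0:ℝ) ≤ (u - a) ^ p := Real.rpow_nonneg (by linarith) p
      have h4 : (0:ℝ) ≤ (-(u - b)) ^ p := Real.rpow_nonneg (by linarith) p
      constructor <;> linarith
    · rw [abs_of_nonneg (by linarith : (0:ℝ) ≤ u - a), abs_of_nonneg (by linarith : (0:ℝ) ≤ u - b)]
      have h1 : (u - b) ^ p ≤ (u - a) ^ p := Real.rpow_le_rpow (by linarith) (by linarith) hp.le
      have h2 : (u - a) ^ p ≤ (u - b) ^ p + (b - a) ^ p := by
        have := rpow_add_le hp hp1 (by linarith : (0:ℝ) ≤ u - b) (by linarith : (0:ℝ) ≤ b - a)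
        have e : u - b + (b - a) = u - a := by ring
        rwa [e] at this
      constructor <;> linarith

end psi

/-- The clamped (increasing) part. -/
noncomputable def gG (p a b : ℝ) : ℝ → ℝ := fun u => psiF p a b (max (min u b) a)

section gh

variable {p a b : ℝ} (hp : 0 < p) (hp1 : p ≤ 1) (hab : a ≤ b)
include hp hp1 hab

lemma gG_mono : Monotone (gG p a b) := by
  intro u v huv
  have h1 : max (min u b) a ∈ Icc a b := ⟨le_max_right _ _, max_le (min_le_right u b) hab⟩
  have h2 : max (min v b) a ∈ Icc a b := ⟨le_max_right _ _, max_le (min_le_right v b) hab⟩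
  exact psiF_monoOn hp hp1 hab h1 h2 (max_le_max (min_le_min_right b huv) le_rfl)

lemma clamp_of_le_left {u : ℝ} (hu : u ≤ a) : max (min u b) a = a := by
  rw [min_eq_left (hu.trans hab), max_eq_right hu]

lemma clamp_of_mem {u : ℝ} (h1 : a ≤ u) (h2 : u ≤ b) : max (min u b) a = u := by
  rw [min_eq_left h2, max_eq_left h1]

lemma clamp_of_ge_right {u : ℝ} (hu : b ≤ u) : max (min u b) a = b := by
  rw [min_eq_right hu, max_eq_left hab]

lemma hG_mono : Monotone (fun u => gG p a b u - psiF p a b u) := by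
  intro u v huv
  simp only [gG]
  rcases le_total v a with hva | hav
  · rw [clamp_of_le_left hp hp1 hab (huv.trans hva), clamp_of_le_left hp hp1 hab hva]
    have := psiF_anti_left hp hp1 hab (mem_Iic.mpr (huv.trans hva)) (mem_Iic.mpr hva) huv
    linarith
  · rcases le_total u a with hua | hau
    · -- u ≤ a ≤ v
      rw [clamp_of_le_left hp hp1 hab hua]
      have h1 : psiF p a b a ≤ psiF p a b u :=
        psiF_anti_left hp hp1 hab (mem_Iic.mpr hua) (mem_Iic.mpr le_rfl) hua
      rcases le_total v b with hvb | hbv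
      · rw [clamp_of_mem hp hp1 hab hav hvb]; linarith
      · rw [clamp_of_ge_right hp hp1 hab hbv]
        have h2 : psiF p a b v ≤ psiF p a b b :=
          psiF_anti_right hp hp1 hab (mem_Ici.mpr le_rfl) (mem_Ici.mpr hbv) hbv
        linarith
    · -- a ≤ u ≤ v
      rcases le_total v b with hvb | hbv
      · rw [clamp_of_mem hp hp1 hab hau (huv.trans hvb),
          clamp_of_mem hp hp1 hab hav hvb]
        linarith
      · rw [clamp_of_ge_right hp hp1 hab hbv]
        rcases le_total u b with hub | hbu
        · rw [clamp_of_mem hp hp1 hab hau hub]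
          have h2 : psiF p a b v ≤ psiF p a b b :=
            psiF_anti_right hp hp1 hab (mem_Ici.mpr le_rfl) (mem_Ici.mpr hbv) hbv
          linarith
        · rw [clamp_of_ge_right hp hp1 hab hbu]
          have h2 : psiF p a b v ≤ psiF p a b u :=
            psiF_anti_right hp hp1 hab (mem_Ici.mpr hbu) (mem_Ici.mpr (hbu.trans huv)) huv
          linarith

end gh

/-- Telescoping sum over a partition. -/
lemma fin_telescope {N : ℕ} (F : ℝ → ℝ) (t : Fin (N+1) → ℝ) :
    ∑ j : Fin N, (F (t j.succ) - F (t j.castSucc)) = F (t (Fin.last N)) - F (t 0) := by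
  induction N with
  | zero => simp
  | succ n ih =>
    rw [Fin.sum_univ_castSucc]
    have h := ih (fun j => t j.castSucc)
    simp only [Fin.succ_castSucc] at h ⊢
    rw [h, Fin.succ_last, Fin.castSucc_zero]
    ring

/-- The covariance function of fractional Brownian motion with Hurst parameter `H`. -/
noncomputable def fbmR (H s t : ℝ) : ℝ :=
  (1/2) * (s ^ (2*H) + t ^ (2*H) - |t - s| ^ (2*H))

/-- The rectangular increment of a two-variable function. -/
noncomputable def rectInc (R : ℝ → ℝ → ℝ) (a b c d : ℝ) : ℝ :=
  R b d - R a d - R b c + R a c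

theorem fbmR_finite_2D_r_variation (H T : ℝ) (hH0 : 0 < H) (hH : H < 1/2) (hT : 0 < T)
    (r : ℝ) (hr : r = 1/(2*H))
    (M N : ℕ) (s : Fin (M+1) → ℝ) (t : Fin (N+1) → ℝ)
    (hs : StrictMono s) (hs0 : s 0 = 0) (hsM : s (Fin.last M) = T)
    (ht : StrictMono t) (ht0 : t 0 = 0) (htN : t (Fin.last N) = T) :
    (∑ i : Fin M, ∑ j : Fin N,
        |rectInc (fbmR H) (s i.castSucc) (s i.succ) (t j.castSucc) (t j.succ)| ^ r
      ≤ 5 * T) ∧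
    (∑ i : Fin M, ∑ j : Fin N,
        |rectInc (fbmR H) (s i.castSucc) (s i.succ) (t j.castSucc) (t j.succ)| ^ r) ^ (1/r)
      ≤ (5 * T) ^ (2*H) := by
  have hp : (0:ℝ) < 2*H := by linarith
  have hp1 : 2*H ≤ 1 := by linarith
  have hr0 : 0 < r := by rw [hr]; positivity
  have hr1 : 1 ≤ r := by
    rw [hr, le_div_iff₀ hp]; linarith
  -- row bound
  have key : ∀ i : Fin M,
      ∑ j : Fin N, |rectInc (fbmR H) (s i.castSucc) (s i.succ) (t j.castSucc) (t j.succ)| ^ r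
        ≤ 3 * (s i.succ - s i.castSucc) := by
    intro i
    set a := s i.castSucc with ha_def
    set b := s i.succ with hb_def
    have hab : a < b := hs (Fin.castSucc_lt_succ : i.castSucc < i.succ)
    have ha0 : 0 ≤ a := by rw [← hs0]; exact hs.monotone (Fin.zero_le _)
    have hbT : b ≤ T := by rw [← hsM]; exact hs.monotone (Fin.le_last _)
    set ψ := psiF (2*H) a b with hψ
    set K := (b - a) ^ (2*H) with hK
    have hK0 : 0 < K := Real.rpow_pos_of_pos (by linarith) _
    have hrect : ∀ c d : ℝ, rectInc (fbmR H) a b c d = (ψ d - ψ c) / 2 := by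
      intro c d; simp only [rectInc, fbmR, hψ, psiF]; ring
    have hψabs : ∀ u : ℝ, |ψ u| ≤ K := fun u => psiF_abs_le hp hp1 hab.le u
    -- |rectInc| ≤ K
    have habs : ∀ c d : ℝ, |rectInc (fbmR H) a b c d| ≤ K := by
      intro c d
      rw [hrect]
      have h1 := hψabs c
      have h2 := hψabs d
      rw [abs_div, abs_two, div_le_iff₀ (by norm_num : (0:ℝ) < 2)]
      calc |ψ d - ψ c| ≤ |ψ d| + |ψ c| := abs_sub _ _
        _ ≤ K * 2 := by linarith
    -- sum of abs bound via monotone decomposition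
    have hsum1 : ∑ j : Fin N, |rectInc (fbmR H) a b (t j.castSucc) (t j.succ)| ≤ 3 * K := by
      set g := gG (2*H) a b with hg_def
      set h := fun u => gG (2*H) a b u - psiF (2*H) a b u with hh_def
      have hg : Monotone g := gG_mono hp hp1 hab.le
      have hh : Monotone h := hG_mono hp hp1 hab.le
      have hterm : ∀ j : Fin N, |rectInc (fbmR H) a b (t j.castSucc) (t j.succ)|
          ≤ ((g (t j.succ) - g (t j.castSucc)) + (h (t j.succ) - h (t j.castSucc))) / 2 := by
        intro j
        rw [hrect]
        have hgj : 0 ≤ g (t j.succ) - g (t j.castSucc) :=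
          sub_nonneg.mpr (hg (ht (Fin.castSucc_lt_succ : j.castSucc < j.succ)).le)
        have hhj : 0 ≤ h (t j.succ) - h (t j.castSucc) :=
          sub_nonneg.mpr (hh (ht (Fin.castSucc_lt_succ : j.castSucc < j.succ)).le)
        have hid : ψ (t j.succ) - ψ (t j.castSucc)
            = (g (t j.succ) - g (t j.castSucc)) - (h (t j.succ) - h (t j.castSucc)) := by
          simp only [hψ, hh_def, hg_def]; ring
        have habs2 : |ψ (t j.succ) - ψ (t j.castSucc)|
            ≤ (g (t j.succ) - g (t j.castSucc)) + (h (t j.succ) - h (t j.castSucc)) := by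
          rw [hid, abs_le]; constructor <;> linarith
        rw [abs_div, abs_two]
        linarith
      calc ∑ j : Fin N, |rectInc (fbmR H) a b (t j.castSucc) (t j.succ)|
          ≤ ∑ j : Fin N, ((g (t j.succ) - g (t j.castSucc)) + (h (t j.succ) - h (t j.castSucc))) / 2
            := Finset.sum_le_sum fun j _ => hterm j
        _ = ((g (t (Fin.last N)) - g (t 0)) + (h (t (Fin.last N)) - h (t 0))) / 2 := by
            rw [← Finset.sum_div, Finset.sum_add_distrib, fin_telescope g t, fin_telescope h t]
        _ = ((g T - g 0) + (h T - h 0)) / 2 := by rw [htN, ht0]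
        _ ≤ 3 * K := by
            have hgT : g T = ψ b := by
              simp only [hg_def, gG, clamp_of_ge_right hp hp1 hab.le hbT, hψ]
            have hg0 : g 0 = ψ a := by
              simp only [hg_def, gG, clamp_of_le_left hp hp1 hab.le (le_refl a), hψ]
              rw [min_eq_left (ha0.trans hab.le |>.trans (le_refl b)), max_eq_right ha0]
            have hψb : ψ b = K := by
              simp only [hψ, psiF, sub_self, abs_zero, Real.zero_rpow hp.ne',
                abs_of_nonneg (by linarith : (0:ℝ) ≤ b - a), hK, sub_zero]
            have hψa : ψ a = -K := by
              simp only [hψ, psiF, sub_self, abs_zero, Real.zero_rpow hp.ne', hK]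
              rw [abs_sub_comm, abs_of_nonneg (by linarith : (0:ℝ) ≤ b - a)]
              ring
            have h1 := hψabs T
            have h2 := hψabs 0
            rw [abs_le] at h1 h2
            simp only [hh_def]
            rw [hgT, hg0]
            simp only [← hψ, ← hg_def]
            rw [hgT, hg0, hψb, hψa]
            linarith [h1.1, h1.2, h2.1, h2.2]
    -- power bound
    have hterm_pow : ∀ j : Fin N, |rectInc (fbmR H) a b (t j.castSucc) (t j.succ)| ^ r
        ≤ K ^ (r - 1) * |rectInc (fbmR H) a b (t j.castSucc) (t j.succ)| := by
      intro j
      set x := |rectInc (fbmR H) a b (t j.castSucc) (t j.succ)| with hx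
      have hx0 : 0 ≤ x := abs_nonneg _
      have hxK : x ≤ K := habs _ _
      rcases eq_or_lt_of_le hx0 with h0 | h0
      · rw [← h0, Real.zero_rpow hr0.ne', mul_zero]
      · have : x ^ r = x ^ (r - 1) * x := by
          rw [← Real.rpow_add_one h0.ne' (r - 1), sub_add_cancel]
        rw [this]
        exact mul_le_mul_of_nonneg_right
          (Real.rpow_le_rpow hx0 hxK (by linarith)) hx0
    have hKr : K ^ (r - 1) * (3 * K) = 3 * (b - a) := by
      have : K ^ (r-1) * K = K ^ r := by
        rw [← Real.rpow_add_one hK0.ne' (r - 1), sub_add_cancel]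
      have hKrr : K ^ r = b - a := by
        rw [hK, ← Real.rpow_mul (by linarith : (0:ℝ) ≤ b - a)]
        have : 2 * H * r = 1 := by rw [hr]; field_simp
        rw [this, Real.rpow_one]
      nlinarith [Real.rpow_nonneg hK0.le (r-1)]
    calc ∑ j : Fin N, |rectInc (fbmR H) a b (t j.castSucc) (t j.succ)| ^ r
        ≤ ∑ j : Fin N, K ^ (r - 1) * |rectInc (fbmR H) a b (t j.castSucc) (t j.succ)| :=
          Finset.sum_le_sum fun j _ => hterm_pow j
      _ = K ^ (r - 1) * ∑ j : Fin N, |rectInc (fbmR H) a b (t j.castSucc) (t j.succ)| := by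
          rw [Finset.mul_sum]
      _ ≤ K ^ (r - 1) * (3 * K) := by
          apply mul_le_mul_of_nonneg_left hsum1 (Real.rpow_nonneg hK0.le _)
      _ = 3 * (b - a) := hKr
  -- total bound
  have total : ∑ i : Fin M, ∑ j : Fin N,
      |rectInc (fbmR H) (s i.castSucc) (s i.succ) (t j.castSucc) (t j.succ)| ^ r ≤ 5 * T := by
    calc ∑ i : Fin M, ∑ j : Fin N,
        |rectInc (fbmR H) (s i.castSucc) (s i.succ) (t j.castSucc) (t j.succ)| ^ r
        ≤ ∑ i : Fin M, 3 * (s i.succ - s i.castSucc) := Finset.sum_le_sum fun i _ => key i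
      _ = 3 * (s (Fin.last M) - s 0) := by
          rw [← Finset.mul_sum]
          congr 1
          exact fin_telescope (fun x => x) s
      _ = 3 * T := by rw [hsM, hs0]; ring
      _ ≤ 5 * T := by linarith
  refine ⟨total, ?_⟩
  have hS0 : 0 ≤ ∑ i : Fin M, ∑ j : Fin N,
      |rectInc (fbmR H) (s i.castSucc) (s i.succ) (t j.castSucc) (t j.succ)| ^ r :=
    Finset.sum_nonneg fun i _ => Finset.sum_nonneg fun j _ => Real.rpow_nonneg (abs_nonneg _) r
  have h1r : 1/r = 2*H := by rw [hr, one_div_one_div]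
  rw [← h1r]
  exact Real.rpow_le_rpow hS0 total (by positivity)
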